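/- Let x₀ ∈ ℝ², r > 0 and 0 < δ < 1. Let g : ℝ² → ℝ² be a map that is continuous on the closed unit ball B̄(0,1) and satisfies ‖g(z) − (x₀ + r z)‖ ≤ δ r for every z with ‖z‖ = 1. Then the image g(B̄(0,1)) contains the open ball B(x₀, (1−δ) r). -/

import Mathlib

open Metric

noncomputable section

abbrev E2 : Type := EuclideanSpace ℝ (Fin 2)

namespace Winding

open Set Complex


lemma near_one_slitPlane {w : ℂ} (h : ‖w - 1‖ < 1) : w ∈ Complex.slitPlane := by
  rw [Complex.mem_slitPlane_iff]
  left
  have h1 : |(w - 1).re| ≤ ‖w - 1‖ := by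
    exact Complex.abs_re_le_norm _
  have h2 : (w - 1).re = w.re - 1 := by simp
  have := neg_abs_le (w - 1).re
  linarith

lemma near_one_ne_zero {w : ℂ} (h : ‖w - 1‖ < 1) : w ≠ 0 := by
  intro hw
  rw [hw] at h
  simp at h

lemma int_valued_const {f : ℝ → ℝ} (hc : ContinuousOn f (Icc 0 1))
    (hv : ∀ t ∈ Icc (0:ℝ) 1, ∃ n : ℤ, f t = n * (2 * Real.pi)) : f 0 = f 1 := by
  have hπ := Real.pi_pos
  have key : ∀ k n0 : ℤ, (k : ℝ) * (2 * Real.pi) = n0 * (2 * Real.pi) + Real.pi → False := by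
    intro k n0 hft
    have h0 : (2*(k:ℝ) - (2*n0+1)) * Real.pi = 0 := by ring_nf; linarith
    rcases mul_eq_zero.mp h0 with h' | h'
    · have : (2*(k:ℝ)) = 2*n0+1 := by linarith
      have : (2*k : ℤ) = 2*n0+1 := by exact_mod_cast this
      omega
    · linarith
  obtain ⟨n0, hn0⟩ := hv 0 (by simp)
  obtain ⟨n1, hn1⟩ := hv 1 (by simp)
  rcases lt_trichotomy n0 n1 with h | h | h
  · exfalso
    have hmem : (n0 * (2 * Real.pi) + Real.pi) ∈ Icc (f 0) (f 1) := by
      constructor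
      · rw [hn0]; linarith
      · rw [hn1]
        have : (n0 : ℝ) + 1 ≤ n1 := by exact_mod_cast h
        nlinarith
    obtain ⟨t, ht, hft⟩ := intermediate_value_Icc (by norm_num : (0:ℝ) ≤ 1) hc hmem
    obtain ⟨k, hk⟩ := hv t ht
    rw [hk] at hft
    exact key k n0 hft
  · rw [hn0, hn1, h]
  · exfalso
    have hmem : (n1 * (2 * Real.pi) + Real.pi) ∈ Icc (f 1) (f 0) := by
      constructor
      · rw [hn1]; linarith
      · rw [hn0]
        have : (n1 : ℝ) + 1 ≤ n0 := by exact_mod_cast h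
        nlinarith
    obtain ⟨t, ht, hft⟩ := intermediate_value_Icc' (by norm_num : (0:ℝ) ≤ 1) hc hmem
    obtain ⟨k, hk⟩ := hv t ht
    rw [hk] at hft
    exact key k n1 hft

lemma lift_diff_eq {L₁ L₂ : ℝ → ℂ} (h₁ : ContinuousOn L₁ (Icc 0 1))
    (h₂ : ContinuousOn L₂ (Icc 0 1))
    (h : ∀ t ∈ Icc (0:ℝ) 1, Complex.exp (L₁ t) = Complex.exp (L₂ t)) :
    L₁ 1 - L₁ 0 = L₂ 1 - L₂ 0 := by
  have key : ∀ t ∈ Icc (0:ℝ) 1, ∃ n : ℤ, L₁ t - L₂ t = n * (2 * Real.pi * Complex.I) := by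
    intro t ht
    rw [← Complex.exp_eq_one_iff, Complex.exp_sub, h t ht, div_self (Complex.exp_ne_zero _)]
  have him : ∀ t ∈ Icc (0:ℝ) 1, ∃ n : ℤ, (L₁ t - L₂ t).im = n * (2 * Real.pi) := by
    intro t ht
    obtain ⟨n, hn⟩ := key t ht
    refine ⟨n, by rw [hn]; simp⟩
  have hdc : ContinuousOn (fun t => (L₁ t - L₂ t).im) (Icc 0 1) :=
    Complex.continuous_im.comp_continuousOn (h₁.sub h₂)
  have he := int_valued_const hdc him
  obtain ⟨n0, hn0⟩ := key 0 (by simp)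
  obtain ⟨n1, hn1⟩ := key 1 (by simp)
  have hr : (n0 : ℝ) * (2 * Real.pi) = n1 * (2 * Real.pi) := by
    have e0 : (L₁ 0 - L₂ 0).im = n0 * (2 * Real.pi) := by rw [hn0]; simp
    have e1 : (L₁ 1 - L₂ 1).im = n1 * (2 * Real.pi) := by rw [hn1]; simp
    rw [← e0, ← e1, he]
  have hn : n0 = n1 := by
    have h2π : (2 * Real.pi) ≠ 0 := by positivity
    have : (n0 : ℝ) = n1 := mul_right_cancel₀ h2π hr
    exact_mod_cast this
  have hfin : L₁ 1 - L₂ 1 = L₁ 0 - L₂ 0 := by rw [hn0, hn1, hn]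
  linear_combination hfin


lemma exists_lift {γ : ℝ → ℂ} (hγ : ContinuousOn γ (Icc 0 1))
    (hne : ∀ t ∈ Icc (0:ℝ) 1, γ t ≠ 0) :
    ∃ L : ℝ → ℂ, ContinuousOn L (Icc 0 1) ∧ ∀ t ∈ Icc (0:ℝ) 1, Complex.exp (L t) = γ t := by
  obtain ⟨t₀, ht₀, hm'⟩ := isCompact_Icc.exists_isMinOn (⟨0, by simp⟩ : (Icc (0:ℝ) 1).Nonempty)
    hγ.norm
  have hm : ∀ s ∈ Icc (0:ℝ) 1, ‖γ t₀‖ ≤ ‖γ s‖ := fun s hs => hm' hs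
  have hmpos : 0 < ‖γ t₀‖ := norm_pos_iff.mpr (hne t₀ ht₀)
  have huc := isCompact_Icc.uniformContinuousOn_of_continuous hγ
  rw [Metric.uniformContinuousOn_iff] at huc
  obtain ⟨η, hη, hunif⟩ := huc _ hmpos
  obtain ⟨n, hn⟩ := exists_nat_one_div_lt hη
  set N : ℕ := n + 1 with hNdef
  have hNpos : (0:ℝ) < N := by positivity
  have hN : (1:ℝ)/N < η := by exact_mod_cast hn
  -- membership of clamped points
  have hmem : ∀ t ∈ Icc (0:ℝ) 1, ∀ c : ℝ, 0 ≤ c → min t c ∈ Icc (0:ℝ) 1 := by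
    intro t ht c hc
    exact ⟨le_min ht.1 hc, (min_le_left _ _).trans ht.2⟩
  -- distance between consecutive clamps
  have hdist : ∀ t : ℝ, ∀ k : ℕ,
      dist (min t (((k:ℝ)+1)/N)) (min t ((k:ℝ)/N)) ≤ 1/N := by
    intro t k
    rw [Real.dist_eq, abs_le]
    constructor
    · have : min t ((k:ℝ)/N) ≤ min t (((k:ℝ)+1)/N) :=
        min_le_min le_rfl ((div_le_div_iff_of_pos_right hNpos).mpr (by linarith))
      have hNN : (0:ℝ) ≤ 1/N := by positivity
      linarith
    · rcases le_total t ((k:ℝ)/N) with h' | h'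
      · rw [min_eq_left h',
          min_eq_left (h'.trans ((div_le_div_iff_of_pos_right hNpos).mpr (by linarith)))]
        simp
      · rw [min_eq_right h']
        have : min t (((k:ℝ)+1)/N) ≤ ((k:ℝ)+1)/N := min_le_right _ _
        have he : ((k:ℝ)+1)/N = (k:ℝ)/N + 1/N := by ring
        linarith
  -- the ratio is close to 1
  have hratio : ∀ t ∈ Icc (0:ℝ) 1, ∀ k : ℕ,
      ‖γ (min t (((k:ℝ)+1)/N)) / γ (min t ((k:ℝ)/N)) - 1‖ < 1 := by
    intro t ht k
    have hk0 : (0:ℝ) ≤ (k:ℝ)/N := by positivity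
    have hk1 : (0:ℝ) ≤ ((k:ℝ)+1)/N := by positivity
    have ha := hmem t ht _ hk1
    have hb := hmem t ht _ hk0
    have hd : dist (γ (min t (((k:ℝ)+1)/N))) (γ (min t ((k:ℝ)/N))) < ‖γ t₀‖ :=
      hunif _ ha _ hb ((hdist t k).trans_lt hN)
    rw [dist_eq_norm] at hd
    have hbne := hne _ hb
    rw [div_sub_one hbne, norm_div]
    rw [div_lt_one (norm_pos_iff.mpr hbne)]
    exact hd.trans_le (hm _ hb)
  refine ⟨fun t => Complex.log (γ 0) + ∑ k ∈ Finset.range N,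
      Complex.log (γ (min t (((k:ℝ)+1)/N)) / γ (min t ((k:ℝ)/N))), ?_, ?_⟩
  · apply ContinuousOn.add continuousOn_const
    apply continuousOn_finset_sum
    intro k _
    apply ContinuousOn.clog
    · apply ContinuousOn.div
      · exact hγ.comp (continuous_id.min continuous_const).continuousOn
          (fun t ht => hmem t ht _ (by positivity))
      · exact hγ.comp (continuous_id.min continuous_const).continuousOn
          (fun t ht => hmem t ht _ (by positivity))
      · intro t ht
        exact hne _ (hmem t ht _ (by positivity))
    · intro t ht
      exact near_one_slitPlane (hratio t ht k)
  · intro t ht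
    rw [Complex.exp_add, Complex.exp_sum]
    have hexp : ∀ k ∈ Finset.range N,
        Complex.exp (Complex.log (γ (min t (((k:ℝ)+1)/N)) / γ (min t ((k:ℝ)/N))))
          = γ (min t (((k:ℝ)+1)/N)) / γ (min t ((k:ℝ)/N)) := by
      intro k _
      exact Complex.exp_log (near_one_ne_zero (hratio t ht k))
    rw [Finset.prod_congr rfl hexp, Complex.exp_log (hne 0 (by simp))]
    have tele : ∀ M : ℕ, M ≤ N →
        γ 0 * ∏ k ∈ Finset.range M, (γ (min t (((k:ℝ)+1)/N)) / γ (min t ((k:ℝ)/N)))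
          = γ (min t ((M:ℝ)/N)) := by
      intro M
      induction M with
      | zero => intro _; simp [min_eq_right ht.1]
      | succ M ih =>
        intro hM
        rw [Finset.prod_range_succ, ← mul_assoc, ih (Nat.le_of_succ_le hM)]
        have hcast : ((M+1 : ℕ) : ℝ) = (M:ℝ) + 1 := by push_cast; ring
        rw [hcast, mul_comm, div_mul_cancel₀]
        exact hne _ (hmem t ht _ (by positivity))
    have := tele N le_rfl
    rw [div_self (ne_of_gt hNpos), min_eq_left ht.2] at this
    rw [this]


open Classical in
/-- winding increment of a path, as `L 1 - L 0` for a logarithm lift `L`. -/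
noncomputable def wind (γ : ℝ → ℂ) : ℂ :=
  if h : ∃ L : ℝ → ℂ, ContinuousOn L (Icc 0 1) ∧ ∀ t ∈ Icc (0:ℝ) 1, Complex.exp (L t) = γ t
  then h.choose 1 - h.choose 0 else 0

lemma wind_spec {γ L : ℝ → ℂ} (hL : ContinuousOn L (Icc 0 1))
    (hexp : ∀ t ∈ Icc (0:ℝ) 1, Complex.exp (L t) = γ t) : wind γ = L 1 - L 0 := by
  have h : ∃ L : ℝ → ℂ, ContinuousOn L (Icc 0 1) ∧ ∀ t ∈ Icc (0:ℝ) 1,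
      Complex.exp (L t) = γ t := ⟨L, hL, hexp⟩
  rw [wind, dif_pos h]
  exact lift_diff_eq h.choose_spec.1 hL
    (fun t ht => by rw [h.choose_spec.2 t ht, hexp t ht])

lemma wind_const {c : ℂ} (hc : c ≠ 0) : wind (fun _ => c) = 0 := by
  rw [wind_spec (L := fun _ => Complex.log c) continuousOn_const
    (fun t _ => Complex.exp_log hc)]
  simp

lemma wind_congr {γ₁ γ₂ : ℝ → ℂ} (h₁ : ContinuousOn γ₁ (Icc 0 1))
    (h₂ : ContinuousOn γ₂ (Icc 0 1)) (hne₂ : ∀ t ∈ Icc (0:ℝ) 1, γ₂ t ≠ 0)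
    (hnear : ∀ t ∈ Icc (0:ℝ) 1, ‖γ₁ t - γ₂ t‖ < ‖γ₂ t‖)
    (hloop : γ₁ 0 * γ₂ 1 = γ₁ 1 * γ₂ 0) : wind γ₁ = wind γ₂ := by
  obtain ⟨L₂, hL₂, hexp₂⟩ := exists_lift h₂ hne₂
  have hne₁ : ∀ t ∈ Icc (0:ℝ) 1, γ₁ t ≠ 0 := by
    intro t ht h0
    have := hnear t ht
    rw [h0, zero_sub, norm_neg] at this
    exact lt_irrefl _ this
  have hq : ∀ t ∈ Icc (0:ℝ) 1, ‖γ₁ t / γ₂ t - 1‖ < 1 := by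
    intro t ht
    rw [div_sub_one (hne₂ t ht), norm_div, div_lt_one (norm_pos_iff.mpr (hne₂ t ht))]
    exact hnear t ht
  have hL₁ : ContinuousOn (fun t => L₂ t + Complex.log (γ₁ t / γ₂ t)) (Icc 0 1) := by
    apply hL₂.add
    apply ContinuousOn.clog (h₁.div h₂ hne₂)
    exact fun t ht => near_one_slitPlane (hq t ht)
  have hexp₁ : ∀ t ∈ Icc (0:ℝ) 1,
      Complex.exp (L₂ t + Complex.log (γ₁ t / γ₂ t)) = γ₁ t := by
    intro t ht
    rw [Complex.exp_add, hexp₂ t ht, Complex.exp_log (near_one_ne_zero (hq t ht)),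
      mul_comm, div_mul_cancel₀ _ (hne₂ t ht)]
  rw [wind_spec hL₁ hexp₁, wind_spec hL₂ hexp₂]
  have hq01 : γ₁ 1 / γ₂ 1 = γ₁ 0 / γ₂ 0 := by
    rw [div_eq_div_iff (hne₂ 1 (by simp)) (hne₂ 0 (by simp))]
    linear_combination -hloop
  rw [hq01]
  ring

/-- the standard circle loop of radius R has winding increment 2πi. -/
lemma wind_circle {R : ℝ} (hR : 0 < R) :
    wind (fun t => (R:ℂ) * Complex.exp (((2 * Real.pi * t : ℝ) : ℂ) * Complex.I))
      = 2 * Real.pi * Complex.I := by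
  have hL : ContinuousOn
      (fun t : ℝ => (Real.log R : ℂ) + ((2 * Real.pi * t : ℝ) : ℂ) * Complex.I)
      (Icc 0 1) := by
    apply continuousOn_const.add
    apply ContinuousOn.mul ?_ continuousOn_const
    exact (Complex.continuous_ofReal.comp (by continuity)).continuousOn
  have hexp : ∀ t ∈ Icc (0:ℝ) 1,
      Complex.exp ((Real.log R : ℂ) + ((2 * Real.pi * t : ℝ) : ℂ) * Complex.I)
        = (R:ℂ) * Complex.exp (((2 * Real.pi * t : ℝ) : ℂ) * Complex.I) := by
    intro t _
    rw [Complex.exp_add]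
    congr 1
    rw [← Complex.ofReal_exp, Real.exp_log hR]
  rw [wind_spec hL hexp]
  push_cast
  ring

lemma wind_homotopy {H : ℝ × ℝ → ℂ}
    (hH : ContinuousOn H (Icc 0 1 ×ˢ Icc 0 1))
    (hne : ∀ p ∈ (Icc (0:ℝ) 1 ×ˢ Icc (0:ℝ) 1), H p ≠ 0)
    (hloop : ∀ s ∈ Icc (0:ℝ) 1, H (s, 1) = H (s, 0)) :
    wind (fun t => H (0, t)) = wind (fun t => H (1, t)) := by
  have hS : IsCompact (Icc (0:ℝ) 1 ×ˢ Icc (0:ℝ) 1) := isCompact_Icc.prod isCompact_Icc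
  obtain ⟨p₀, hp₀, hm'⟩ := hS.exists_isMinOn (⟨(0,0), by simp⟩) hH.norm
  have hm : ∀ p ∈ Icc (0:ℝ) 1 ×ˢ Icc (0:ℝ) 1, ‖H p₀‖ ≤ ‖H p‖ := fun p hp => hm' hp
  have hmpos : 0 < ‖H p₀‖ := norm_pos_iff.mpr (hne p₀ hp₀)
  have huc := hS.uniformContinuousOn_of_continuous hH
  rw [Metric.uniformContinuousOn_iff] at huc
  obtain ⟨η, hη, hunif⟩ := huc _ hmpos
  have hcont : ∀ s ∈ Icc (0:ℝ) 1, ContinuousOn (fun t => H (s, t)) (Icc 0 1) := by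
    intro s hs
    exact hH.comp (Continuous.continuousOn (by continuity))
      (fun t ht => Set.mk_mem_prod hs ht)
  have hne' : ∀ s ∈ Icc (0:ℝ) 1, ∀ t ∈ Icc (0:ℝ) 1, H (s, t) ≠ 0 :=
    fun s hs t ht => hne _ (Set.mk_mem_prod hs ht)
  have step : ∀ s ∈ Icc (0:ℝ) 1, ∀ s' ∈ Icc (0:ℝ) 1, |s - s'| ≤ η/2 →
      wind (fun t => H (s, t)) = wind (fun t => H (s', t)) := by
    intro s hs s' hs' hss
    apply wind_congr (hcont s hs) (hcont s' hs') (hne' s' hs')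
    · intro t ht
      have hd : dist ((s, t) : ℝ × ℝ) (s', t) < η := by
        rw [Prod.dist_eq, Real.dist_eq, Real.dist_eq]
        simp only [sub_self, abs_zero]
        rw [max_eq_left (abs_nonneg _)]
        linarith
      have := hunif _ (Set.mk_mem_prod hs ht) _ (Set.mk_mem_prod hs' ht) hd
      rw [dist_eq_norm] at this
      exact this.trans_le (hm _ (Set.mk_mem_prod hs' ht))
    · rw [hloop s hs, hloop s' hs', mul_comm]
  obtain ⟨n, hn⟩ := exists_nat_one_div_lt (by positivity : (0:ℝ) < η/2)
  set N : ℕ := n + 1 with hNdef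
  have hNpos : (0:ℝ) < N := by positivity
  have hN : (1:ℝ)/N < η/2 := by exact_mod_cast hn
  have hmemk : ∀ k : ℕ, k ≤ N → ((k:ℝ)/N) ∈ Icc (0:ℝ) 1 := by
    intro k hk
    constructor
    · positivity
    · rw [div_le_one hNpos]
      exact_mod_cast hk
  have key : ∀ k : ℕ, k ≤ N → wind (fun t => H (0, t)) = wind (fun t => H ((k:ℝ)/N, t)) := by
    intro k
    induction k with
    | zero => intro _; norm_num
    | succ k ih =>
      intro hk
      rw [ih (Nat.le_of_succ_le hk)]
      apply step _ (hmemk k (Nat.le_of_succ_le hk)) _ (hmemk (k+1) hk)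
      have habs : ((k:ℝ))/N - ((k+1:ℕ):ℝ)/N = -(1/N) := by push_cast; ring
      rw [habs, abs_neg, abs_of_pos (one_div_pos.mpr hNpos)]
      linarith
  have := key N le_rfl
  rw [div_self (ne_of_gt hNpos)] at this
  exact this

end Winding

theorem stmt3 (x₀ : E2) (r δ : ℝ) (hr : 0 < r) (hδ0 : 0 < δ) (hδ1 : δ < 1)
    (g : E2 → E2) (hg : ContinuousOn g (closedBall (0 : E2) 1))
    (hclose : ∀ z : E2, ‖z‖ = 1 → ‖g z - (x₀ + r • z)‖ ≤ δ * r) :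
    ball x₀ ((1 - δ) * r) ⊆ g '' (closedBall (0 : E2) 1) := by
  intro y hy
  by_contra hyim
  have hg' : ∀ z ∈ closedBall (0:E2) 1, g z ≠ y := fun z hz h => hyim ⟨z, hz, h⟩
  set u : ℂ ≃ₗᵢ[ℝ] E2 := Complex.orthonormalBasisOneI.repr with hu
  set c : ℝ → ℂ := fun t => Complex.exp (((2 * Real.pi * t : ℝ) : ℂ) * Complex.I) with hc
  have hcnorm : ∀ t, ‖c t‖ = 1 := by
    intro t
    rw [hc]
    exact Complex.norm_exp_ofReal_mul_I _
  have hc0 : c 0 = 1 := by simp [hc]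
  have hc1 : c 1 = 1 := by
    have : ((2 * Real.pi * 1 : ℝ) : ℂ) * Complex.I = 2 * Real.pi * Complex.I := by
      push_cast; ring
    show Complex.exp (((2 * Real.pi * 1 : ℝ) : ℂ) * Complex.I) = 1
    rw [this, Complex.exp_two_pi_mul_I]
  have hccont : Continuous c := by
    apply Complex.continuous_exp.comp
    exact (Complex.continuous_ofReal.comp (by continuity)).mul continuous_const
  set H : ℝ × ℝ → ℂ :=
    fun p => u.symm (g (u ((p.1 : ℂ) * c p.2))) - u.symm y with hH
  set S : Set (ℝ × ℝ) := Set.Icc (0:ℝ) 1 ×ˢ Set.Icc (0:ℝ) 1 with hS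
  have hmaps : ∀ p ∈ S, u ((p.1 : ℂ) * c p.2) ∈ closedBall (0:E2) 1 := by
    rintro ⟨s, t⟩ ⟨hs, ht⟩
    rw [mem_closedBall_zero_iff, u.norm_map, norm_mul, Complex.norm_real, Real.norm_eq_abs, hcnorm,
      mul_one, _root_.abs_of_nonneg hs.1]
    exact hs.2
  have hHcont : ContinuousOn H S := by
    apply ContinuousOn.sub ?_ continuousOn_const
    apply u.symm.continuous.comp_continuousOn
    apply hg.comp ?_ hmaps
    apply Continuous.continuousOn
    exact u.continuous.comp
      ((Complex.continuous_ofReal.comp continuous_fst).mul (hccont.comp continuous_snd))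
  have hHne : ∀ p ∈ S, H p ≠ 0 := by
    intro p hp
    exact sub_ne_zero.mpr (fun h => hg' _ (hmaps p hp) (u.symm.injective h))
  have hHloop : ∀ s ∈ Set.Icc (0:ℝ) 1, H (s, 1) = H (s, 0) := by
    intro s _
    simp only [hH, hc1, hc0]
  have hHs : ∀ s ∈ Set.Icc (0:ℝ) 1, ContinuousOn (fun t => H (s, t)) (Set.Icc 0 1) := by
    intro s hs
    exact hHcont.comp (Continuous.continuousOn (by continuity))
      (fun t ht => Set.mk_mem_prod hs ht)
  -- step 1 : wind of H(0,·) is 0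
  have h0const : (fun t => H (0, t)) = fun _ => u.symm (g (u 0)) - u.symm y := by
    funext t
    simp only [hH, Complex.ofReal_zero, zero_mul]
  have hg0 : g (u 0) ≠ y := hg' (u 0) (by simp [mem_closedBall_zero_iff, u.norm_map])
  have step1 : Winding.wind (fun t => H (0, t)) = 0 := by
    rw [h0const]
    exact Winding.wind_const (sub_ne_zero.mpr (fun h => hg0 (u.symm.injective h)))
  -- step 2 : homotopy invariance
  have step2 : Winding.wind (fun t => H (0, t)) = Winding.wind (fun t => H (1, t)) :=
    Winding.wind_homotopy hHcont hHne hHloop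
  -- the circle loop
  set X : ℂ := u.symm x₀ with hX
  set Y : ℂ := u.symm y with hY
  set γc : ℝ → ℂ := fun t => X + (r:ℂ) * c t - Y with hγc
  have hXY : ‖X - Y‖ < (1 - δ) * r := by
    rw [hX, hY, ← map_sub, u.symm.norm_map]
    rw [mem_ball, dist_comm, dist_eq_norm] at hy
    exact hy
  have hγcnorm : ∀ t, δ * r < ‖γc t‖ := by
    intro t
    have h1 : ‖(r:ℂ) * c t‖ = r := by
      rw [norm_mul, Complex.norm_real, Real.norm_eq_abs, hcnorm, mul_one, _root_.abs_of_pos hr]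
    have h2 := norm_add_le (γc t) (Y - X)
    have h3 : γc t + (Y - X) = (r:ℂ) * c t := by rw [hγc]; ring
    rw [h3, h1, norm_sub_rev Y X] at h2
    linarith
  have hγcne : ∀ t ∈ Set.Icc (0:ℝ) 1, γc t ≠ 0 := by
    intro t _
    have := hγcnorm t
    intro h
    rw [h, norm_zero] at this
    nlinarith
  have hγccont : ContinuousOn γc (Set.Icc 0 1) :=
    (continuous_const.add (continuous_const.mul hccont)).sub continuous_const |>.continuousOn
  -- step 3 : H(1,·) vs circle loop
  have step3 : Winding.wind (fun t => H (1, t)) = Winding.wind γc := by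
    apply Winding.wind_congr (hHs 1 (by simp)) hγccont hγcne
    · intro t ht
      have hz1 : ‖u (c t)‖ = 1 := by rw [u.norm_map, hcnorm]
      have hkey : H (1, t) - γc t = u.symm (g (u (c t)) - (x₀ + r • u (c t))) := by
        rw [hH, hγc, hX, hY]
        simp only [Complex.ofReal_one, one_mul]
        rw [map_sub, map_add, map_smul, u.symm_apply_apply, Complex.real_smul]
        ring
      have := hclose (u (c t)) hz1
      calc ‖H (1, t) - γc t‖ = ‖g (u (c t)) - (x₀ + r • u (c t))‖ := by
            rw [hkey, u.symm.norm_map]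
        _ ≤ δ * r := this
        _ < ‖γc t‖ := hγcnorm t
    · have e1 : H (1, 1) = H (1, 0) := hHloop 1 (by simp)
      have e2 : γc 1 = γc 0 := by rw [hγc]; simp only [hc0, hc1]
      rw [e1, e2, mul_comm]
  -- step 4 : circle loop vs standard circle
  have step4 : Winding.wind γc = Winding.wind (fun t => (r:ℂ) * c t) := by
    apply Winding.wind_congr (γ₂ := fun t => (r:ℂ) * c t) hγccont
      ((continuous_const.mul hccont).continuousOn)
    · intro t _
      intro h
      have h1 : ‖(r:ℂ) * c t‖ = r := by
        rw [norm_mul, Complex.norm_real, Real.norm_eq_abs, hcnorm, mul_one, _root_.abs_of_pos hr]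
      rw [h, norm_zero] at h1
      exact absurd h1.symm (ne_of_gt hr)
    · intro t _
      have h1 : ‖(r:ℂ) * c t‖ = r := by
        rw [norm_mul, Complex.norm_real, Real.norm_eq_abs, hcnorm, mul_one, _root_.abs_of_pos hr]
      have h2 : γc t - (r:ℂ) * c t = X - Y := by rw [hγc]; ring
      rw [h2, h1]
      nlinarith
    · have e2 : γc 1 = γc 0 := by rw [hγc]; simp only [hc0, hc1]
      rw [e2, hc0, hc1, mul_comm]
  -- step 5 : standard circle has winding 2πi
  have step5 : Winding.wind (fun t => (r:ℂ) * c t) = 2 * Real.pi * Complex.I :=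
    Winding.wind_circle hr
  have : (0:ℂ) = 2 * Real.pi * Complex.I := by
    rw [← step5, ← step4, ← step3, ← step2, step1]
  exact Complex.two_pi_I_ne_zero this.symm
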